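/- arXiv:2304.04114 — 3 statements merged into one kernel-verified Lean document; each statement's English description precedes it below -/
import Mathlib

section
/- The negative cone G⁻ of a right ℓ-group G, equipped with the operation x → y := (y x⁻¹) ∧ e and the element e, is an L-algebra: it satisfies x → x = x → e = e, e → x = x, (x → y) → (x → z) = (y → x) → (y → z), and (x → y = e ∧ y → x = e) → x = y. -/
/-- The arrow operation `x → y := (y * x⁻¹) ⊓ 1` on the negative cone of a right ℓ-group. -/
def arr {G : Type*} [Lattice G] [Group G] (x y : G) : G := (y * x⁻¹) ⊓ 1

private lemma inf_mul_right {G : Type*} [Lattice G] [Group G]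
    [CovariantClass G G (Function.swap (· * ·)) (· ≤ ·)]
    (a b c : G) : (a ⊓ b) * c = a * c ⊓ b * c := by
  apply le_antisymm
  · exact le_inf (mul_le_mul_left inf_le_left c) (mul_le_mul_left inf_le_right c)
  · have h : (a * c ⊓ b * c) * c⁻¹ ≤ a ⊓ b :=
      le_inf (by simpa using mul_le_mul_left (inf_le_left : a*c⊓b*c ≤ a*c) c⁻¹)
             (by simpa using mul_le_mul_left (inf_le_right : a*c⊓b*c ≤ b*c) c⁻¹)
    calc a * c ⊓ b * c = ((a * c ⊓ b * c) * c⁻¹) * c := by group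
      _ ≤ (a ⊓ b) * c := mul_le_mul_left h c

private lemma arr_key {G : Type*} [Lattice G] [Group G]
    [CovariantClass G G (Function.swap (· * ·)) (· ≤ ·)]
    (a b c : G) : arr (arr a b) (arr a c) = c * (b ⊓ a)⁻¹ ⊓ 1 := by
  unfold arr
  have h1 : (1 : G) ≤ (b * a⁻¹ ⊓ 1)⁻¹ := by
    simpa using mul_le_mul_left (inf_le_right : b * a⁻¹ ⊓ 1 ≤ 1) (b * a⁻¹ ⊓ 1)⁻¹
  have h2 : (c * a⁻¹ ⊓ 1) * (b * a⁻¹ ⊓ 1)⁻¹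
      = c * a⁻¹ * (b * a⁻¹ ⊓ 1)⁻¹ ⊓ (b * a⁻¹ ⊓ 1)⁻¹ := by
    simpa using inf_mul_right (c * a⁻¹) 1 (b * a⁻¹ ⊓ 1)⁻¹
  have h3 : (b * a⁻¹ ⊓ 1) * a = b ⊓ a := by
    simpa using inf_mul_right (b * a⁻¹) 1 a
  have h4 : c * a⁻¹ * (b * a⁻¹ ⊓ 1)⁻¹ = c * (b ⊓ a)⁻¹ := by
    rw [← h3]; group
  rw [h2, h4, inf_assoc, inf_eq_right.mpr h1]

/-- The negative cone of a right ℓ-group, with `x → y := (y x⁻¹) ⊓ 1` and the element `1`,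
is an L-algebra. -/
theorem cones_are_l_algebras {G : Type*} [Lattice G] [Group G]
    [CovariantClass G G (Function.swap (· * ·)) (· ≤ ·)]
    (x y z : G) (hx : x ≤ 1) (hy : y ≤ 1) (hz : z ≤ 1) :
    arr x x = 1 ∧ arr x 1 = 1 ∧
    arr 1 x = x ∧
    arr (arr x y) (arr x z) = arr (arr y x) (arr y z) ∧
    (arr x y = 1 → arr y x = 1 → x = y) := by
  refine ⟨?_, ?_, ?_, ?_, ?_⟩
  · simp [arr]
  · have h : (1 : G) ≤ x⁻¹ := by simpa using mul_le_mul_left hx x⁻¹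
    simp [arr, inf_eq_right.mpr h]
  · simp [arr, inf_eq_left.mpr hx]
  · rw [arr_key, arr_key, inf_comm y x]
  · intro h1 h2
    have hxy : x ≤ y := by
      have : (1 : G) ≤ y * x⁻¹ := by
        rw [arr] at h1; exact h1 ▸ inf_le_left
      simpa using mul_le_mul_left this x
    have hyx : y ≤ x := by
      have : (1 : G) ≤ x * y⁻¹ := by
        rw [arr] at h2; exact h2 ▸ inf_le_left
      simpa using mul_le_mul_left this y
    exact le_antisymm hxy hyx
end

section
/- Let G be a modular noetherian right ℓ-group with strong order unit s, and let g ∈ G⁻ be d-homogeneous with right-normal factorization g = g_k g_{k-1} ⋯ g₁ (all deg(g_i) = d). Then this factorization is also left-normal, i.e., g_{i+1} ∧ s^{-1} g_i^{-1} = s^{-1} for all 1 ≤ i < k. -/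
/-- An element `s` of a right ℓ-group is normal if left multiplication by `s` preserves
the lattice operations. -/
def IsNormal {G : Type*} [Lattice G] [Group G] (s : G) : Prop :=
  ∀ x y : G, s * (x ⊓ y) = s * x ⊓ s * y ∧ s * (x ⊔ y) = s * x ⊔ s * y

/-- A strong order unit: a normal element `s > 1` such that every `g` satisfies
`g ≤ sⁿ` for some integer `n`. -/
def IsStrongOrderUnit {G : Type*} [Lattice G] [Group G] (s : G) : Prop :=
  1 < s ∧ IsNormal s ∧ ∀ g : G, ∃ n : ℤ, g ≤ s ^ n

/-- A right ℓ-group is noetherian if every ascending chain bounded above and every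
descending chain bounded below stabilizes. -/
def IsLatticeNoetherian (G : Type*) [Lattice G] : Prop :=
  (∀ f : ℕ → G, Monotone f → (∃ h : G, ∀ n, f n ≤ h) → ∃ N, ∀ m, N ≤ m → f m = f N) ∧
  (∀ f : ℕ → G, Antitone f → (∃ h : G, ∀ n, h ≤ f n) → ∃ N, ∀ m, N ≤ m → f m = f N)

section Aux

variable {G : Type*} [Lattice G] [Group G]
  [CovariantClass G G (Function.swap (· * ·)) (· ≤ ·)]

/-- From ascending-chain stabilization, bounded nonempty sets have maximal elements. -/
lemma aux_exists_max
    (hACC : ∀ f : ℕ → G, Monotone f → (∃ h : G, ∀ n, f n ≤ h) → ∃ N, ∀ m, N ≤ m → f m = f N)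
    (S : Set G) (x₀ : G) (hx₀ : x₀ ∈ S) (b : G) (hb : ∀ x ∈ S, x ≤ b) :
    ∃ m ∈ S, ∀ x ∈ S, ¬ m < x := by
  by_contra h
  push_neg at h
  have h' : ∀ m : G, ∃ x : G, m ∈ S → x ∈ S ∧ m < x := by
    intro m
    by_cases hm : m ∈ S
    · obtain ⟨x, hx, hlt⟩ := h m hm
      exact ⟨x, fun _ => ⟨hx, hlt⟩⟩
    · exact ⟨m, fun hc => absurd hc hm⟩
  choose F hF using h'
  set f : ℕ → G := fun n => F^[n] x₀ with hf
  have hmem : ∀ n, f n ∈ S ∧ f n < f (n + 1) := by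
    intro n
    induction n with
    | zero =>
      refine ⟨hx₀, ?_⟩
      have := hF x₀ hx₀
      simpa [hf, Function.iterate_succ_apply'] using this.2
    | succ n ih =>
      have h1 : f (n + 1) ∈ S := by
        have := (hF (f n) ih.1).1
        simpa [hf, Function.iterate_succ_apply'] using this
      refine ⟨h1, ?_⟩
      have := (hF (f (n + 1)) h1).2
      simpa [hf, Function.iterate_succ_apply'] using this
  have hmono : Monotone f := monotone_nat_of_le_succ fun n => (hmem n).2.le
  obtain ⟨N, hN⟩ := hACC f hmono ⟨b, fun n => hb _ (hmem n).1⟩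
  have := (hmem N).2
  rw [hN (N + 1) (by omega)] at this
  exact lt_irrefl _ this

/-- From descending-chain stabilization, bounded nonempty sets have minimal elements. -/
lemma aux_exists_min
    (hDCC : ∀ f : ℕ → G, Antitone f → (∃ h : G, ∀ n, h ≤ f n) → ∃ N, ∀ m, N ≤ m → f m = f N)
    (S : Set G) (x₀ : G) (hx₀ : x₀ ∈ S) (b : G) (hb : ∀ x ∈ S, b ≤ x) :
    ∃ m ∈ S, ∀ x ∈ S, ¬ x < m := by
  by_contra h
  push_neg at h
  have h' : ∀ m : G, ∃ x : G, m ∈ S → x ∈ S ∧ x < m := by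
    intro m
    by_cases hm : m ∈ S
    · obtain ⟨x, hx, hlt⟩ := h m hm
      exact ⟨x, fun _ => ⟨hx, hlt⟩⟩
    · exact ⟨m, fun hc => absurd hc hm⟩
  choose F hF using h'
  set f : ℕ → G := fun n => F^[n] x₀ with hf
  have hmem : ∀ n, f n ∈ S ∧ f (n + 1) < f n := by
    intro n
    induction n with
    | zero =>
      refine ⟨hx₀, ?_⟩
      have := hF x₀ hx₀
      simpa [hf, Function.iterate_succ_apply'] using this.2
    | succ n ih =>
      have h1 : f (n + 1) ∈ S := by
        have := (hF (f n) ih.1).1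
        simpa [hf, Function.iterate_succ_apply'] using this
      refine ⟨h1, ?_⟩
      have := (hF (f (n + 1)) h1).2
      simpa [hf, Function.iterate_succ_apply'] using this
  have hanti : Antitone f := antitone_nat_of_succ_le fun n => (hmem n).2.le
  obtain ⟨N, hN⟩ := hDCC f hanti ⟨b, fun n => hb _ (hmem n).1⟩
  have := (hmem N).2
  rw [hN (N + 1) (by omega)] at this
  exact lt_irrefl _ this

/-- Covers are preserved by right multiplication. -/
lemma aux_covBy_mul_right {a b : G} (c : G) (h : a ⋖ b) : a * c ⋖ b * c := by
  have e := OrderIso.mulRight (α := G) c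
  constructor
  · exact (OrderIso.mulRight (α := G) c).strictMono h.1
  · intro z h1 h2
    have h1' : a < z * c⁻¹ := by
      have := (OrderIso.mulRight (α := G) c⁻¹).strictMono h1
      simpa [mul_assoc] using this
    have h2' : z * c⁻¹ < b := by
      have := (OrderIso.mulRight (α := G) c⁻¹).strictMono h2
      simpa [mul_assoc] using this
    exact h.2 h1' h2'

variable (deg : G → ℤ)

/-- Degree of a cover. -/
lemma aux_deg_covBy (hdeg : ∀ a b : G, deg (a * b) = deg a + deg b)
    (hatom : ∀ x : G, x ⋖ 1 → deg x = 1) {a b : G} (h : a ⋖ b) :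
    deg a = deg b + 1 := by
  have h1 : a * b⁻¹ ⋖ 1 := by
    simpa using aux_covBy_mul_right (b⁻¹) h
  have h2 : deg (a * b⁻¹) = 1 := hatom _ h1
  have h3 : deg (a * b⁻¹ * b) = deg (a * b⁻¹) + deg b := hdeg _ _
  rw [inv_mul_cancel_right] at h3
  omega

/-- `deg` is strictly antitone and hence injective on comparable pairs. -/
lemma aux_deg_strict_anti (hG : IsLatticeNoetherian G)
    (hdeg : ∀ a b : G, deg (a * b) = deg a + deg b)
    (hatom : ∀ x : G, x ⋖ 1 → deg x = 1) (v : G) :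
    ∀ u : G, v ≤ u → deg u ≤ deg v ∧ (v < u → deg u < deg v) := by
  -- well-founded induction on u in {y // v ≤ y} with respect to <
  have wf : WellFounded (fun p q : {y : G // v ≤ y} => p.1 < q.1) := by
    rw [WellFounded.wellFounded_iff_has_min]
    intro S ⟨x, hx⟩
    obtain ⟨m, hmS, hmin⟩ := aux_exists_min hG.2 (Subtype.val '' S) x.1 ⟨x, hx, rfl⟩ v
      (by rintro _ ⟨y, _, rfl⟩; exact y.2)
    obtain ⟨m', hm'S, rfl⟩ := hmS
    exact ⟨m', hm'S, fun y hy hlt => hmin y.1 ⟨y, hy, rfl⟩ hlt⟩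
  intro u hu
  have main : ∀ p : {y : G // v ≤ y},
      deg p.1 ≤ deg v ∧ (v < p.1 → deg p.1 < deg v) := by
    intro p
    induction p using WellFounded.induction wf with
    | _ p ih =>
      rcases eq_or_lt_of_le p.2 with heq | hlt
      · constructor
        · rw [← heq]
        · intro hc
          rw [← heq] at hc
          exact absurd hc (lt_irrefl v)
      · -- find w maximal in [v, p)
        obtain ⟨w, hwS, hwmax⟩ := aux_exists_max hG.1 {x : G | v ≤ x ∧ x < p.1} v
          ⟨le_rfl, hlt⟩ p.1 (fun x hx => hx.2.le)
        have hcov : w ⋖ p.1 := by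
          refine ⟨hwS.2, fun c hc1 hc2 => ?_⟩
          exact hwmax c ⟨hwS.1.trans hc1.le, hc2⟩ hc1
        have hdw : deg w = deg p.1 + 1 := aux_deg_covBy deg hdeg hatom hcov
        have ihw : deg w ≤ deg v ∧ (v < w → deg w < deg v) := ih ⟨w, hwS.1⟩ hwS.2
        constructor
        · omega
        · intro _
          omega
  exact main ⟨u, hu⟩

lemma aux_deg_eq_of_le (hG : IsLatticeNoetherian G)
    (hdeg : ∀ a b : G, deg (a * b) = deg a + deg b)
    (hatom : ∀ x : G, x ⋖ 1 → deg x = 1) {v u : G} (h : v ≤ u)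
    (hd : deg u = deg v) : v = u := by
  rcases eq_or_lt_of_le h with heq | hlt
  · exact heq
  · have := (aux_deg_strict_anti deg hG hdeg hatom v u h).2 hlt
    omega

/-- The parallelogram identity for the degree, in a modular noetherian ℓ-group. -/
lemma aux_parallelogram [IsModularLattice G] (hG : IsLatticeNoetherian G)
    (hdeg : ∀ a b : G, deg (a * b) = deg a + deg b)
    (hatom : ∀ x : G, x ⋖ 1 → deg x = 1) (x y : G) :
    deg (x ⊓ y) + deg (x ⊔ y) = deg x + deg y := by
  set c := x ⊓ y with hc
  -- well-founded induction on y in {z // c ≤ z} with respect to <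
  have wf : WellFounded (fun p q : {z : G // c ≤ z} => p.1 < q.1) := by
    rw [WellFounded.wellFounded_iff_has_min]
    intro S ⟨a, ha⟩
    obtain ⟨m, hmS, hmin⟩ := aux_exists_min hG.2 (Subtype.val '' S) a.1 ⟨a, ha, rfl⟩ c
      (by rintro _ ⟨z, _, rfl⟩; exact z.2)
    obtain ⟨m', hm'S, rfl⟩ := hmS
    exact ⟨m', hm'S, fun z hz hlt => hmin z.1 ⟨z, hz, rfl⟩ hlt⟩
  have main : ∀ p : {z : G // c ≤ z}, x ⊓ p.1 = c →
      deg c + deg (x ⊔ p.1) = deg x + deg p.1 := by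
    intro p
    induction p using WellFounded.induction wf with
    | _ p ih =>
      intro hinf
      rcases eq_or_lt_of_le p.2 with heq | hlt
      · -- p = c, so p ≤ x
        have hpx : p.1 ≤ x := heq ▸ (hc ▸ inf_le_left : c ≤ x)
        rw [sup_eq_left.mpr hpx, ← heq]
        ring
      · -- c < p; find w with c ≤ w ⋖ p
        obtain ⟨w, hwS, hwmax⟩ := aux_exists_max hG.1 {z : G | c ≤ z ∧ z < p.1} c
          ⟨le_rfl, hlt⟩ p.1 (fun z hz => hz.2.le)
        have hcov : w ⋖ p.1 := by
          refine ⟨hwS.2, fun d hd1 hd2 => ?_⟩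
          exact hwmax d ⟨hwS.1.trans hd1.le, hd2⟩ hd1
        have hwy : w ≤ p.1 := hcov.1.le
        have hcx : c ≤ x := hc ▸ inf_le_left
        -- x ⊓ w = c
        have hinfw : x ⊓ w = c :=
          le_antisymm (hinf ▸ inf_le_inf_left x hwy) (le_inf hcx hwS.1)
        -- key modular computation: (x ⊔ w) ⊓ p = w
        have hmod : (w ⊔ x) ⊓ p.1 = w := by
          rw [sup_inf_assoc_of_le x hwy, hinf]
          exact sup_eq_left.mpr hwS.1
        -- x ⊔ w < x ⊔ p
        have hsupne : x ⊔ w ≠ x ⊔ p.1 := by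
          intro hEq
          have : p.1 ≤ w := by
            have h1 : p.1 ≤ x ⊔ p.1 := le_sup_right
            have h2 : p.1 ≤ (w ⊔ x) := by rw [sup_comm]; exact hEq ▸ h1
            have := hmod ▸ (le_inf h2 le_rfl)
            exact this
          exact absurd (lt_of_lt_of_le hcov.1 this) (lt_irrefl w)
        have hsuplt : x ⊔ w < x ⊔ p.1 :=
          lt_of_le_of_ne (sup_le_sup_left hwy x) hsupne
        -- x ⊔ w ⋖ x ⊔ p
        have hsupcov : x ⊔ w ⋖ x ⊔ p.1 := by
          refine ⟨hsuplt, fun z hz1 hz2 => ?_⟩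
          have hxz : x ≤ z := le_trans le_sup_left hz1.le
          have hz' : z ⊓ p.1 ≤ p.1 := inf_le_right
          have hwz : w ≤ z ⊓ p.1 := by
            refine le_inf ?_ hwy
            exact le_trans le_sup_right hz1.le
          rcases eq_or_lt_of_le hwz with heqw | hltw
          · -- then z = x ⊔ (z ⊓ p) = x ⊔ w, contradiction
            have hmod2 : (x ⊔ p.1) ⊓ z = x ⊔ (p.1 ⊓ z) := sup_inf_assoc_of_le p.1 hxz
            have hzle : z ≤ x ⊔ p.1 := hz2.le
            rw [inf_eq_right.mpr hzle] at hmod2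
            rw [inf_comm p.1 z, ← heqw] at hmod2
            exact absurd (hmod2 ▸ hz1) (lt_irrefl _)
          · rcases eq_or_lt_of_le hz' with heqp | hltp
            · -- z ⊓ p = p means p ≤ z, so x ⊔ p ≤ z, contradiction
              have : p.1 ≤ z := inf_eq_right.mp heqp
              exact absurd (lt_of_lt_of_le hz2 (sup_le hxz this)) (lt_irrefl z)
            · exact hcov.2 hltw hltp
        have h1 : deg w = deg p.1 + 1 := aux_deg_covBy deg hdeg hatom hcov
        have h2 : deg (x ⊔ w) = deg (x ⊔ p.1) + 1 := aux_deg_covBy deg hdeg hatom hsupcov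
        have ihw : deg c + deg (x ⊔ w) = deg x + deg w := ih ⟨w, hwS.1⟩ hwS.2 hinfw
        omega
  have := main ⟨y, hc ▸ inf_le_right⟩ rfl
  simpa using this

end Aux

/-- In a modular noetherian right ℓ-group with strong order unit `s`, if `g ≤ 1` is
`d`-homogeneous (all right-normal factors `g_i = (g ⊔ s^{-i})(g ⊔ s^{-(i-1)})⁻¹` have
degree `d`), then the right-normal factorization is also left-normal:
`g_{i+1} ⊓ s⁻¹ g_i⁻¹ = s⁻¹` for `1 ≤ i < k`. -/
theorem homogeneous_rightnormal_implies_leftnormal {G : Type*} [Lattice G] [Group G]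
    [CovariantClass G G (Function.swap (· * ·)) (· ≤ ·)] [IsModularLattice G]
    (hG : IsLatticeNoetherian G) (s : G) (hs : IsStrongOrderUnit s)
    (deg : G → ℤ) (hdeg : ∀ a b : G, deg (a * b) = deg a + deg b)
    (hatom : ∀ x : G, x ⋖ 1 → deg x = 1)
    (g : G) (hg : g ≤ 1)
    (k : ℕ) (hk : s ^ (-(k : ℤ)) ≤ g) (hkmin : ∀ j : ℕ, j < k → ¬ s ^ (-(j : ℤ)) ≤ g)
    (dd : ℤ)
    (hhom : ∀ i : ℕ, 1 ≤ i → i ≤ k →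
      deg ((g ⊔ s ^ (-(i : ℤ))) * (g ⊔ s ^ (-(i : ℤ) + 1))⁻¹) = dd) :
    ∀ i : ℕ, 1 ≤ i → i < k →
      (g ⊔ s ^ (-(i : ℤ) - 1)) * (g ⊔ s ^ (-(i : ℤ)))⁻¹ ⊓
        s⁻¹ * ((g ⊔ s ^ (-(i : ℤ))) * (g ⊔ s ^ (-(i : ℤ) + 1))⁻¹)⁻¹ = s⁻¹ := by
  intro i hi1 hik
  obtain ⟨hs1, hsnorm, -⟩ := hs
  -- basic facts about s⁻¹
  have hsinv_le : (s⁻¹ : G) ≤ 1 := by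
    have := mul_le_mul_left hs1.le s⁻¹
    simpa using this
  have hsinv_mul_le : ∀ x : G, s⁻¹ * x ≤ x := by
    intro x
    have := mul_le_mul_left hsinv_le x
    simpa using this
  -- normality of s⁻¹ for sup
  have hsinv_sup : ∀ x y : G, s⁻¹ * (x ⊔ y) = s⁻¹ * x ⊔ s⁻¹ * y := by
    intro x y
    have h := (hsnorm (s⁻¹ * x) (s⁻¹ * y)).2
    simp only [mul_inv_cancel_left] at h
    calc s⁻¹ * (x ⊔ y) = s⁻¹ * (s * (s⁻¹ * x ⊔ s⁻¹ * y)) := by rw [← h]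
    _ = s⁻¹ * x ⊔ s⁻¹ * y := by rw [inv_mul_cancel_left]
  -- abbreviations
  set A := g ⊔ s ^ (-(i : ℤ) - 1) with hA
  set B := g ⊔ s ^ (-(i : ℤ)) with hB
  set C := g ⊔ s ^ (-(i : ℤ) + 1) with hC
  -- power facts
  have hp1 : s⁻¹ * s ^ (-(i : ℤ) + 1) = s ^ (-(i : ℤ)) := by
    rw [← zpow_neg_one, ← zpow_add]; ring_nf
  have hp2 : s⁻¹ * s ^ (-(i : ℤ)) = s ^ (-(i : ℤ) - 1) := by
    rw [← zpow_neg_one, ← zpow_add]; ring_nf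
  -- s⁻¹ * C and s⁻¹ * B as sups
  have hsC : s⁻¹ * C = s⁻¹ * g ⊔ s ^ (-(i : ℤ)) := by
    rw [hC, hsinv_sup, hp1]
  have hsB : s⁻¹ * B = s⁻¹ * g ⊔ s ^ (-(i : ℤ) - 1) := by
    rw [hB, hsinv_sup, hp2]
  -- key order facts
  have hinvg_le : s⁻¹ * g ≤ g := hsinv_mul_le g
  have hpow_le : s ^ (-(i : ℤ) - 1) ≤ s ^ (-(i : ℤ)) := by
    rw [← hp2]; exact hsinv_mul_le _
  -- v := s⁻¹ * B ≤ A and v ≤ s⁻¹ * C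
  have hvA : s⁻¹ * B ≤ A := by
    rw [hsB, hA]
    exact sup_le (le_trans hinvg_le le_sup_left) le_sup_right
  have hvC : s⁻¹ * B ≤ s⁻¹ * C := by
    rw [hsB, hsC]
    exact sup_le le_sup_left (le_trans hpow_le le_sup_right)
  have hv_le_u : s⁻¹ * B ≤ A ⊓ s⁻¹ * C := le_inf hvA hvC
  -- A ⊔ s⁻¹ * C = B
  have hsup : A ⊔ s⁻¹ * C = B := by
    apply le_antisymm
    · rw [hA, hsC, hB]
      exact sup_le (sup_le le_sup_left (le_trans hpow_le le_sup_right))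
        (sup_le (le_trans hinvg_le le_sup_left) le_sup_right)
    · rw [hB, hA, hsC]
      exact sup_le (le_trans le_sup_left le_sup_left) (le_trans le_sup_right le_sup_right)
  -- degree facts
  have hdeg1 : deg (1 : G) = 0 := by
    have := hdeg 1 1; simpa using this
  have hdeginv : ∀ a : G, deg a⁻¹ = - deg a := by
    intro a
    have := hdeg a a⁻¹
    simp only [mul_inv_cancel, hdeg1] at this
    omega
  -- homogeneity at i and i+1
  have hh1 : deg B - deg C = dd := by
    have := hhom i hi1 (le_of_lt hik)
    rw [hdeg, hdeginv] at this
    rw [← hB, ← hC] at this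
    omega
  have hh2 : deg A - deg B = dd := by
    have := hhom (i + 1) (by omega) (by omega)
    rw [show (-(↑(i + 1) : ℤ)) = -(i : ℤ) - 1 by push_cast; ring,
      show ((-(i:ℤ) - 1) + 1) = -(i : ℤ) by ring] at this
    rw [hdeg, hdeginv] at this
    rw [← hA, ← hB] at this
    omega
  -- deg (s⁻¹ * C) and deg (s⁻¹ * B)
  have hdC : deg (s⁻¹ * C) = deg s⁻¹ + deg C := hdeg _ _
  have hdB : deg (s⁻¹ * B) = deg s⁻¹ + deg B := hdeg _ _
  -- parallelogram
  have hpar := aux_parallelogram deg hG hdeg hatom A (s⁻¹ * C)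
  rw [hsup] at hpar
  -- conclude deg (A ⊓ s⁻¹C) = deg (s⁻¹B)
  have hdeq : deg (A ⊓ s⁻¹ * C) = deg (s⁻¹ * B) := by omega
  have hkey : s⁻¹ * B = A ⊓ s⁻¹ * C :=
    aux_deg_eq_of_le deg hG hdeg hatom hv_le_u hdeq
  -- finish: multiply through by B⁻¹ on the right
  have hrr : (A ⊓ s⁻¹ * C) * B⁻¹ = (s⁻¹ * B) * B⁻¹ := by rw [← hkey]
  rw [inf_mul] at hrr
  calc A * B⁻¹ ⊓ s⁻¹ * (B * C⁻¹)⁻¹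
      = A * B⁻¹ ⊓ (s⁻¹ * C) * B⁻¹ := by
        rw [mul_inv_rev, inv_inv, ← mul_assoc]
    _ = s⁻¹ := by rw [hrr, mul_inv_cancel_right]
end

section
/- Let G be a modular noetherian right ℓ-group with strong order unit s where s^{-1} = ⋀ X(G⁻). Then s = ⋁{g ∈ G : g ≻ e}, the join of all atoms over e, and the interval [e, s] is a modular geometric lattice. -/
set_option linter.unusedSectionVars false
set_option linter.unusedVariables false


section Aux

variable {G : Type*} [Lattice G] [Group G]
  [CovariantClass G G (Function.swap (· * ·)) (· ≤ ·)]

/-! ### Right-translation facts -/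

lemma RLG.le_iff_mul_right (c : G) {x y : G} : x ≤ y ↔ x * c ≤ y * c := by
  constructor
  · exact fun h => mul_le_mul_left h c
  · intro h
    have := mul_le_mul_left h c⁻¹
    simpa [mul_assoc] using this

lemma RLG.lt_iff_mul_right (c : G) {x y : G} : x < y ↔ x * c < y * c := by
  simp only [lt_iff_le_not_ge, ← RLG.le_iff_mul_right]

lemma RLG.covBy_mul_right (c : G) {x y : G} (h : x ⋖ y) : x * c ⋖ y * c := by
  refine ⟨(RLG.lt_iff_mul_right c).1 h.1, fun z h1 h2 => ?_⟩
  have h1' : x < z * c⁻¹ := by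
    have := (RLG.lt_iff_mul_right c⁻¹).1 h1; simpa [mul_assoc] using this
  have h2' : z * c⁻¹ < y := by
    have := (RLG.lt_iff_mul_right c⁻¹).1 h2; simpa [mul_assoc] using this
  exact h.2 h1' h2'

lemma RLG.normal_mono {s x y : G} (hn : IsNormal s) (h : x ≤ y) : s * x ≤ s * y := by
  have h1 : s * x = s * x ⊓ s * y := by
    rw [← (hn x y).1, inf_eq_left.2 h]
  rw [h1]; exact inf_le_right

/-! ### Noetherian helpers -/

lemma RLG.no_strictAnti (hG : IsLatticeNoetherian G) (f : ℕ → G) (hf : StrictAnti f)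
    (hb : ∃ h : G, ∀ n, h ≤ f n) : False := by
  obtain ⟨N, hN⟩ := hG.2 f hf.antitone hb
  exact absurd (hN (N + 1) (by omega)) (hf (by omega : N < N + 1)).ne

lemma RLG.no_strictMono (hG : IsLatticeNoetherian G) (f : ℕ → G) (hf : StrictMono f)
    (hb : ∃ h : G, ∀ n, f n ≤ h) : False := by
  obtain ⟨N, hN⟩ := hG.1 f hf.monotone hb
  exact absurd (hN (N + 1) (by omega)) (hf (by omega : N < N + 1)).ne'

lemma RLG.exists_minimal (hG : IsLatticeNoetherian G) (S : Set G) (hne : S.Nonempty)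
    (hb : ∃ h : G, ∀ x ∈ S, h ≤ x) : ∃ m ∈ S, ∀ x ∈ S, ¬ x < m := by
  by_contra hcon
  push_neg at hcon
  obtain ⟨a0, ha0⟩ := hne
  choose g hg1 hg2 using hcon
  let f : ℕ → {x : G // x ∈ S} := fun n =>
    Nat.rec ⟨a0, ha0⟩ (fun _ p => ⟨g p.1 p.2, hg1 p.1 p.2⟩) n
  have hstep : ∀ n, (f (n + 1)).1 < (f n).1 := fun n => hg2 (f n).1 (f n).2
  obtain ⟨h, hh⟩ := hb
  exact RLG.no_strictAnti hG (fun n => (f n).1)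
    (strictAnti_nat_of_succ_lt hstep) ⟨h, fun n => hh _ (f n).2⟩

lemma RLG.exists_maximal (hG : IsLatticeNoetherian G) (S : Set G) (hne : S.Nonempty)
    (hb : ∃ h : G, ∀ x ∈ S, x ≤ h) : ∃ m ∈ S, ∀ x ∈ S, ¬ m < x := by
  by_contra hcon
  push_neg at hcon
  obtain ⟨a0, ha0⟩ := hne
  choose g hg1 hg2 using hcon
  let f : ℕ → {x : G // x ∈ S} := fun n =>
    Nat.rec ⟨a0, ha0⟩ (fun _ p => ⟨g p.1 p.2, hg1 p.1 p.2⟩) n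
  have hstep : ∀ n, (f n).1 < (f (n + 1)).1 := fun n => hg2 (f n).1 (f n).2
  obtain ⟨h, hh⟩ := hb
  exact RLG.no_strictMono hG (fun n => (f n).1)
    (strictMono_nat_of_lt_succ hstep) ⟨h, fun n => hh _ (f n).2⟩

/-! ### Coatoms of `s` -/

lemma RLG.one_le_coatom {s y : G} (hglb : IsGLB {x : G | x ⋖ 1} s⁻¹) (h : y ⋖ s) :
    (1 : G) ≤ y := by
  have h1 : y * s⁻¹ ⋖ 1 := by
    have := RLG.covBy_mul_right s⁻¹ h; simpa using this
  have h2 : s⁻¹ ≤ y * s⁻¹ := hglb.1 h1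
  have := mul_le_mul_left h2 s
  simpa [mul_assoc] using this

lemma RLG.le_one_of_le_coatoms {s g : G} (hglb : IsGLB {x : G | x ⋖ 1} s⁻¹)
    (h : ∀ y : G, y ⋖ s → g ≤ y) : g ≤ 1 := by
  have hlb : g * s⁻¹ ∈ lowerBounds {x : G | x ⋖ 1} := by
    intro x hx
    have hxs : x * s ⋖ s := by
      have := RLG.covBy_mul_right s hx; simpa using this
    have := mul_le_mul_left (h _ hxs) s⁻¹
    simpa [mul_assoc] using this
  have := hglb.2 hlb
  have h2 := mul_le_mul_left this s
  simpa [mul_assoc] using h2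

end Aux

/-! ### Modular lattice lemmas -/

section Modular

variable {G : Type*} [Lattice G] [IsModularLattice G]

lemma RLG.covby_of_inf {m b f : G} (hm : m ⋖ b) (hf : f ≤ b) (hfm : ¬ f ≤ m) :
    m ⊓ f ⋖ f := by
  refine ⟨lt_of_le_of_ne inf_le_right fun h => hfm ?_, fun x h1 h2 => ?_⟩
  · conv_lhs => rw [← h]
    exact inf_le_left
  · have hxm : ¬ x ≤ m := fun h => absurd (le_inf h h2.le) (not_le_of_gt h1)
    have hms : m < m ⊔ x := by
      refine lt_of_le_of_ne le_sup_left fun h => hxm ?_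
      conv_rhs => rw [h]
      exact le_sup_right
    have hsup : m ⊔ x = b := by
      have hle : m ⊔ x ≤ b := sup_le hm.1.le (h2.le.trans hf)
      exact hle.lt_or_eq.resolve_left (hm.2 hms)
    have hfx : f = x := by
      have hxf : x ≤ f := h2.le
      calc f = (x ⊔ m) ⊓ f := by
              rw [sup_comm, hsup]; exact (inf_eq_right.2 hf).symm
        _ = x ⊔ m ⊓ f := sup_inf_assoc_of_le m hxf
        _ = x := sup_eq_left.2 h1.le
    exact absurd hfx.symm (ne_of_lt h2)

lemma RLG.strict_inf {d b x y : G} (hd : d ⋖ b) (hxb : x ≤ b) (hyb : y ≤ b)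
    (hxy : x < y) (hxd : ¬ x ≤ d) (hyd : ¬ y ≤ d) : x ⊓ d < y ⊓ d := by
  refine lt_of_le_of_ne (inf_le_inf_right d hxy.le) fun heq => ?_
  have hdx : d < d ⊔ x := by
    refine lt_of_le_of_ne le_sup_left fun h => hxd ?_
    conv_rhs => rw [h]
    exact le_sup_right
  have hsup : d ⊔ x = b := by
    have hle : d ⊔ x ≤ b := sup_le hd.1.le hxb
    exact hle.lt_or_eq.resolve_left (hd.2 hdx)
  have : y = x := by
    calc y = (x ⊔ d) ⊓ y := by
            rw [sup_comm, hsup]; exact (inf_eq_right.2 hyb).symm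
      _ = x ⊔ d ⊓ y := sup_inf_assoc_of_le d hxy.le
      _ = x ⊔ x ⊓ d := by rw [inf_comm, heq]
      _ = x := sup_eq_left.2 inf_le_left
  exact hxy.ne' this

end Modular

/-! ### Covering chains and the chain-length bound -/

inductive RLG.CovChainLE {G : Type*} [Lattice G] : G → G → ℕ → Prop
  | refl (a : G) : RLG.CovChainLE a a 0
  | step {a d b : G} {n : ℕ} : (d ⋖ b ∨ d = b) → RLG.CovChainLE a d n →
      RLG.CovChainLE a b (n + 1)

section Chains

variable {G : Type*} [Lattice G]

lemma RLG.CovChainLE.le {a b : G} {n : ℕ} (h : RLG.CovChainLE a b n) : a ≤ b := by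
  induction h with
  | refl => exact le_rfl
  | step hcov _ ih =>
    rcases hcov with hcov | rfl
    · exact ih.trans hcov.1.le
    · exact ih

lemma RLG.CovChainLE.cons {a b c : G} {n : ℕ} (hc : c ⋖ a ∨ c = a)
    (h : RLG.CovChainLE a b n) : RLG.CovChainLE c b (n + 1) := by
  induction h with
  | refl => exact .step hc (.refl c)
  | step hcov _ ih => exact .step hcov ih

open Classical in
/-- shrink a chain in `[a,b]` to a chain in `[a,d]` where `d ⋖ b`, losing at most one
element. -/
noncomputable def RLG.shrink (d : G) : List G → List G
  | [] => []
  | x :: t => if x ≤ d then x :: RLG.shrink d t else t.map (· ⊓ d)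

lemma RLG.shrink_length (d : G) : ∀ l : List G, l.length ≤ (RLG.shrink d l).length + 1
  | [] => by simp [RLG.shrink]
  | x :: t => by
    by_cases h : x ≤ d
    · simp only [RLG.shrink, if_pos h, List.length_cons]
      have := RLG.shrink_length d t
      omega
    · simp [RLG.shrink, if_neg h]

lemma RLG.shrink_mem {a d : G} (had : a ≤ d) :
    ∀ l : List G, (∀ y ∈ l, a ≤ y) → ∀ x ∈ RLG.shrink d l, a ≤ x ∧ x ≤ d
  | [] => by simp [RLG.shrink]
  | z :: t => by
    intro hmem x hx
    by_cases h : z ≤ d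
    · rw [RLG.shrink, if_pos h] at hx
      rcases List.mem_cons.1 hx with rfl | hx
      · exact ⟨hmem x (List.mem_cons_self), h⟩
      · exact RLG.shrink_mem had t (fun y hy => hmem y (List.mem_cons_of_mem _ hy)) x hx
    · rw [RLG.shrink, if_neg h] at hx
      obtain ⟨y, hy, rfl⟩ := List.mem_map.1 hx
      exact ⟨le_inf (hmem y (List.mem_cons_of_mem _ hy)) had, inf_le_right⟩

variable [IsModularLattice G]

lemma RLG.shrink_chain {d b : G} (hd : d ⋖ b) :
    ∀ l : List G, l.Chain' (· < ·) → (∀ y ∈ l, y ≤ b) →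
      (RLG.shrink d l).Chain' (· < ·) ∧
      (∀ z : G, z ≤ d → (∀ y ∈ l, z < y) → ∀ w ∈ (RLG.shrink d l).head?, z < w)
  | [] => by intro _ _; constructor <;> simp [RLG.shrink, List.Chain']
  | x :: t => by
    intro hl hb
    have htl : t.Chain' (· < ·) := hl.tail
    have hxt : ∀ y ∈ t, x < y := by
      have hp : List.Pairwise (· < ·) (x :: t) := List.isChain_iff_pairwise.1 hl
      exact (List.pairwise_cons.1 hp).1
    have hbt : ∀ y ∈ t, y ≤ b := fun y hy => hb y (List.mem_cons_of_mem _ hy)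
    obtain ⟨ih1, ih2⟩ := RLG.shrink_chain hd t htl hbt
    by_cases hxd : x ≤ d
    · constructor
      · rw [RLG.shrink, if_pos hxd]
        exact List.isChain_cons.2 ⟨fun w hw => ih2 x hxd hxt w hw, ih1⟩
      · intro z hz hlt w hw
        rw [RLG.shrink, if_pos hxd] at hw
        simp only [List.head?_cons, Option.mem_def, Option.some.injEq] at hw
        subst hw
        exact hlt x (List.mem_cons_self)
    · have hnotle : ∀ y ∈ t, ¬ y ≤ d := fun y hy h => hxd ((hxt y hy).le.trans h)
      constructor
      · rw [RLG.shrink, if_neg hxd]; simp only [List.Chain']; rw [List.isChain_map]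
        have hpt : List.Pairwise (· < ·) t := List.isChain_iff_pairwise.1 htl
        refine List.Pairwise.isChain (hpt.imp_of_mem ?_)
        intro u v hu hv huv
        exact RLG.strict_inf hd (hbt u hu) (hbt v hv) huv (hnotle u hu) (hnotle v hv)
      · intro z hz hlt w hw
        rw [RLG.shrink, if_neg hxd] at hw
        cases t with
        | nil => simp at hw
        | cons y0 t2 =>
          simp only [List.map_cons, List.head?_cons, Option.mem_def,
            Option.some.injEq] at hw
          subst hw
          have h1 : z ≤ x ⊓ d := le_inf (hlt x (List.mem_cons_self)).le hz
          have hy0 : y0 ∈ y0 :: t2 := List.mem_cons_self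
          have h2 : x ⊓ d < y0 ⊓ d :=
            RLG.strict_inf hd (hb x (List.mem_cons_self)) (hbt y0 hy0)
              (hxt y0 hy0) hxd (hnotle y0 hy0)
          exact lt_of_le_of_lt h1 h2

lemma RLG.chain_bound {n : ℕ} {a b : G} (h : RLG.CovChainLE a b n) :
    ∀ l : List G, l.Chain' (· < ·) → (∀ x ∈ l, a ≤ x ∧ x ≤ b) → l.length ≤ n + 1 := by
  induction h with
  | refl =>
    intro l hl hmem
    rename_i a
    match l with
    | [] => simp
    | [x] => simp
    | x :: y :: t =>
      exfalso
      have hx : x = a :=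
        le_antisymm (hmem x (List.mem_cons_self)).2 (hmem x (List.mem_cons_self)).1
      have hy : y = a := by
        have hym : y ∈ x :: y :: t := List.mem_cons_of_mem _ (List.mem_cons_self)
        exact le_antisymm (hmem y hym).2 (hmem y hym).1
      have hxy : x < y := (List.isChain_cons_cons.1 hl).1
      rw [hx, hy] at hxy
      exact lt_irrefl a hxy
  | @step d b n hcov hc ih =>
    intro l hl hmem
    rcases hcov with hcov | rfl
    · have hch := (RLG.shrink_chain hcov l hl (fun y hy => (hmem y hy).2)).1
      have hm : ∀ x ∈ RLG.shrink d l, a ≤ x ∧ x ≤ d :=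
        RLG.shrink_mem hc.le l (fun y hy => (hmem y hy).1)
      have h1 := ih (RLG.shrink d l) hch hm
      have h2 := RLG.shrink_length d l
      omega
    · have := ih l hl hmem
      omega

end Chains

section Folds

variable {G : Type*} [Lattice G] [Group G]

lemma RLG.foldr_inf_le_init (s : G) : ∀ M : List G, M.foldr (· ⊓ ·) s ≤ s
  | [] => le_rfl
  | m :: M => le_trans inf_le_right (RLG.foldr_inf_le_init s M)

lemma RLG.le_foldr_inf {g s : G} (hgs : g ≤ s) :
    ∀ M : List G, (∀ m ∈ M, g ≤ m) → g ≤ M.foldr (· ⊓ ·) s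
  | [] => fun _ => hgs
  | m :: M => fun h =>
    le_inf (h m (List.mem_cons_self))
      (RLG.le_foldr_inf hgs M fun x hx => h x (List.mem_cons_of_mem _ hx))

lemma RLG.le_foldr_sup : ∀ l : List G, ∀ x ∈ l, x ≤ l.foldr (· ⊔ ·) 1
  | [] => by simp
  | y :: l => by
    intro x hx
    rcases List.mem_cons.1 hx with rfl | hx
    · exact le_sup_left
    · exact le_trans (RLG.le_foldr_sup l x hx) le_sup_right

lemma RLG.one_le_foldr_sup : ∀ l : List G, (1 : G) ≤ l.foldr (· ⊔ ·) 1
  | [] => le_rfl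
  | y :: l => le_trans (RLG.one_le_foldr_sup l) le_sup_right

lemma RLG.foldr_sup_le {u : G} (hu : (1 : G) ≤ u) :
    ∀ l : List G, (∀ x ∈ l, x ≤ u) → l.foldr (· ⊔ ·) 1 ≤ u
  | [] => fun _ => hu
  | y :: l => fun h =>
    sup_le (h y (List.mem_cons_self))
      (RLG.foldr_sup_le hu l fun x hx => h x (List.mem_cons_of_mem _ hx))

lemma RLG.isLUB_foldr_sup (l : List G) :
    IsLUB (insert (1 : G) {x | x ∈ l}) (l.foldr (· ⊔ ·) 1) := by
  constructor
  · rintro x (rfl | hx)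
    · exact RLG.one_le_foldr_sup l
    · exact RLG.le_foldr_sup l x hx
  · intro u hu
    exact RLG.foldr_sup_le (hu (Set.mem_insert _ _)) l
      (fun x hx => hu (Set.mem_insert_of_mem _ hx))

end Folds

section Main

variable {G : Type*} [Lattice G] [Group G]
  [CovariantClass G G (Function.swap (· * ·)) (· ≤ ·)] [IsModularLattice G]

lemma RLG.exists_coatom_list (hG : IsLatticeNoetherian G) {s : G}
    (hglb : IsGLB {x : G | x ⋖ 1} s⁻¹) (h1s : (1 : G) ≤ s) :
    ∃ M : List G, (∀ m ∈ M, m ⋖ s) ∧ M.foldr (· ⊓ ·) s = 1 := by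
  set T : Set G := {g | ∃ M : List G, (∀ m ∈ M, m ⋖ s) ∧ g = M.foldr (· ⊓ ·) s} with hT
  have hsT : s ∈ T := ⟨[], by simp, rfl⟩
  have hTb : ∀ g ∈ T, (1 : G) ≤ g := by
    rintro g ⟨M, hM, rfl⟩
    exact RLG.le_foldr_inf h1s M fun m hm => RLG.one_le_coatom hglb (hM m hm)
  obtain ⟨g0, hg0T, hg0min⟩ := RLG.exists_minimal hG T ⟨s, hsT⟩ ⟨1, hTb⟩
  obtain ⟨M, hM, rfl⟩ := hg0T
  refine ⟨M, hM, ?_⟩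
  by_contra hne
  have h1g : (1 : G) < M.foldr (· ⊓ ·) s :=
    lt_of_le_of_ne (hTb _ ⟨M, hM, rfl⟩) (Ne.symm hne)
  have hex : ∃ y : G, y ⋖ s ∧ ¬ M.foldr (· ⊓ ·) s ≤ y := by
    by_contra h
    push_neg at h
    exact absurd (RLG.le_one_of_le_coatoms hglb fun y hy => h y hy) (not_le_of_gt h1g)
  obtain ⟨y, hy1, hy2⟩ := hex
  have hmem : y ⊓ M.foldr (· ⊓ ·) s ∈ T := by
    refine ⟨y :: M, ?_, rfl⟩
    intro m hm
    rcases List.mem_cons.1 hm with rfl | hm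
    · exact hy1
    · exact hM m hm
  have hlt : y ⊓ M.foldr (· ⊓ ·) s < M.foldr (· ⊓ ·) s := by
    refine lt_of_le_of_ne inf_le_right fun h => hy2 ?_
    conv_lhs => rw [← h]
    exact inf_le_left
  exact hg0min _ hmem hlt

lemma RLG.compl_exists (hG : IsLatticeNoetherian G) {s : G}
    (hglb : IsGLB {x : G | x ⋖ 1} s⁻¹) {M : List G} (hM : ∀ m ∈ M, m ⋖ s)
    (hfold : M.foldr (· ⊓ ·) s = 1) (h1s : (1 : G) ≤ s)
    {a : G} (ha1 : 1 ≤ a) (has : a ≤ s) :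
    ∃ c : G, 1 ≤ c ∧ c ≤ s ∧ a ⊓ c = 1 ∧ a ⊔ c = s := by
  set S : Set G := {c | 1 ≤ c ∧ c ≤ s ∧ a ⊔ c = s} with hS
  have hsS : s ∈ S := ⟨h1s, le_rfl, sup_eq_right.2 has⟩
  obtain ⟨c, hcS, hmin⟩ := RLG.exists_minimal hG S ⟨s, hsS⟩ ⟨1, fun x hx => hx.1⟩
  obtain ⟨hc1, hcs, hac⟩ := hcS
  refine ⟨c, hc1, hcs, ?_, hac⟩
  by_contra hne
  have h1 : (1 : G) < a ⊓ c := lt_of_le_of_ne (le_inf ha1 hc1) (Ne.symm hne)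
  have hex : ∃ m ∈ M, ¬ a ⊓ c ≤ m := by
    by_contra h
    push_neg at h
    have h2 : a ⊓ c ≤ M.foldr (· ⊓ ·) s :=
      RLG.le_foldr_inf (le_trans inf_le_left has) M h
    rw [hfold] at h2
    exact absurd h2 (not_le_of_gt h1)
  obtain ⟨m, hmM, hm⟩ := hex
  have hcov := hM m hmM
  have hsup : (a ⊓ c) ⊔ m = s := by
    have h2 : m < a ⊓ c ⊔ m := by
      refine lt_of_le_of_ne le_sup_right fun h => hm ?_
      conv_rhs => rw [h]
      exact le_sup_left
    have h4 : a ⊓ c ⊔ m ≤ s := sup_le (le_trans inf_le_left has) hcov.1.le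
    exact h4.lt_or_eq.resolve_left (hcov.2 h2)
  have hc_eq : c = (a ⊓ c) ⊔ (m ⊓ c) := by
    calc c = s ⊓ c := (inf_eq_right.2 hcs).symm
      _ = ((a ⊓ c) ⊔ m) ⊓ c := by rw [hsup]
      _ = (a ⊓ c) ⊔ (m ⊓ c) := sup_inf_assoc_of_le m inf_le_right
  have hS' : m ⊓ c ∈ S := by
    refine ⟨le_inf (RLG.one_le_coatom hglb hcov) hc1, le_trans inf_le_right hcs, ?_⟩
    have hle : c ≤ a ⊔ (m ⊓ c) := by
      calc c = (a ⊓ c) ⊔ (m ⊓ c) := hc_eq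
        _ ≤ a ⊔ (m ⊓ c) := sup_le_sup_right inf_le_left _
    have h5 : a ⊔ c ≤ a ⊔ (m ⊓ c) := sup_le le_sup_left hle
    rw [hac] at h5
    exact le_antisymm (sup_le has (le_trans inf_le_right hcs)) h5
  have hlt : m ⊓ c < c := by
    refine lt_of_le_of_ne inf_le_right fun h => hm ?_
    have hcm : c ≤ m := by
      conv_lhs => rw [← h]
      exact inf_le_left
    exact le_trans inf_le_right hcm
  exact hmin _ hS' hlt

lemma RLG.exists_atom (hG : IsLatticeNoetherian G) {x : G} (h1 : (1 : G) < x) :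
    ∃ p : G, (1 : G) ⋖ p ∧ p ≤ x := by
  obtain ⟨p, ⟨hp1, hpx⟩, hmin⟩ := RLG.exists_minimal hG {y | 1 < y ∧ y ≤ x}
    ⟨x, h1, le_rfl⟩ ⟨1, fun y hy => hy.1.le⟩
  exact ⟨p, ⟨hp1, fun z hz1 hzp => hmin z ⟨hz1, hzp.le.trans hpx⟩ hzp⟩, hpx⟩

lemma RLG.atomistic (hG : IsLatticeNoetherian G) {s : G}
    (hglb : IsGLB {x : G | x ⋖ 1} s⁻¹) {M : List G} (hM : ∀ m ∈ M, m ⋖ s)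
    (hfold : M.foldr (· ⊓ ·) s = 1) (h1s : (1 : G) ≤ s)
    {a : G} (ha1 : 1 ≤ a) (has : a ≤ s) :
    ∃ l : List G, (∀ x ∈ l, (1 : G) ⋖ x ∧ x ≤ a) ∧ l.foldr (· ⊔ ·) 1 = a := by
  set W : Set G :=
    {b | ∃ l : List G, (∀ x ∈ l, (1 : G) ⋖ x ∧ x ≤ a) ∧ b = l.foldr (· ⊔ ·) 1} with hW
  have h1W : (1 : G) ∈ W := ⟨[], by simp, rfl⟩
  have hWle : ∀ b ∈ W, b ≤ a := by
    rintro b ⟨l, hl, rfl⟩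
    exact RLG.foldr_sup_le ha1 l fun x hx => (hl x hx).2
  obtain ⟨b, hbW, hbmax⟩ := RLG.exists_maximal hG W ⟨1, h1W⟩ ⟨a, hWle⟩
  obtain ⟨l, hl, rfl⟩ := hbW
  refine ⟨l, hl, ?_⟩
  by_contra hne
  set b := l.foldr (· ⊔ ·) 1 with hb
  have hba : b < a := lt_of_le_of_ne (hWle b ⟨l, hl, rfl⟩) hne
  have hb1 : (1 : G) ≤ b := RLG.one_le_foldr_sup l
  obtain ⟨c, hc1, hcs, hbc, hbcs⟩ :=
    RLG.compl_exists hG hglb hM hfold h1s hb1 (hba.le.trans has)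
  have ha_eq : a = b ⊔ (a ⊓ c) := by
    calc a = a ⊓ s := (inf_eq_left.2 has).symm
      _ = (b ⊔ c) ⊓ a := by rw [hbcs, inf_comm]
      _ = b ⊔ (c ⊓ a) := sup_inf_assoc_of_le c hba.le
      _ = b ⊔ (a ⊓ c) := by rw [inf_comm]
  have hac1 : (1 : G) < a ⊓ c := by
    refine lt_of_le_of_ne (le_inf ha1 hc1) fun h => ?_
    rw [← h, sup_of_le_left hb1] at ha_eq
    exact hne ha_eq.symm
  obtain ⟨p, hp, hpac⟩ := RLG.exists_atom hG hac1
  have hpa : p ≤ a := hpac.trans inf_le_left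
  have hnew : p ⊔ b ∈ W := by
    refine ⟨p :: l, ?_, rfl⟩
    intro x hx
    rcases List.mem_cons.1 hx with rfl | hx
    · exact ⟨hp, hpa⟩
    · exact hl x hx
  have hlt : b < p ⊔ b := by
    refine lt_of_le_of_ne le_sup_right fun h => ?_
    have hpb : p ≤ b := by
      conv_rhs => rw [h]
      exact le_sup_left
    have hpc : p ≤ c := hpac.trans inf_le_right
    have : p ≤ (1 : G) := by rw [← hbc]; exact le_inf hpb hpc
    exact absurd this (not_le_of_gt hp.1)
  exact hbmax _ hnew hlt

end Main

lemma RLG.covchain_foldr {H : Type*} [Lattice H] [IsModularLattice H] {s : H} :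
    ∀ M : List H, (∀ m ∈ M, m ⋖ s) → RLG.CovChainLE (M.foldr (· ⊓ ·) s) s M.length
  | [] => fun _ => .refl s
  | m :: M => fun h => by
    have hsub := RLG.covchain_foldr M (fun x hx => h x (List.mem_cons_of_mem _ hx))
    have hfs : M.foldr (· ⊓ ·) s ≤ s := hsub.le
    by_cases hfm : M.foldr (· ⊓ ·) s ≤ m
    · have he : m ⊓ M.foldr (· ⊓ ·) s = M.foldr (· ⊓ ·) s := inf_eq_right.2 hfm
      exact RLG.CovChainLE.cons (Or.inr he) hsub
    · exact RLG.CovChainLE.cons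
        (Or.inl (RLG.covby_of_inf (h m (List.mem_cons_self)) hfs hfm)) hsub

/-- In a modular noetherian right ℓ-group with strong order unit `s` where
`s⁻¹ = ⋀ X(G⁻)`, we have `s = ⋁ {g : 1 ⋖ g}`, and the interval `[1, s]` is a modular
geometric lattice: it has finite length and every element is a join of finitely many
atoms over `1`. -/
theorem join_of_atoms_is_strong_order_unit {G : Type*} [Lattice G] [Group G]
    [CovariantClass G G (Function.swap (· * ·)) (· ≤ ·)] [IsModularLattice G]
    (hG : IsLatticeNoetherian G) (s : G)
    (hglb : IsGLB {x : G | x ⋖ 1} s⁻¹) (hs : IsStrongOrderUnit s) :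
    IsLUB {g : G | (1 : G) ⋖ g} s ∧
    (∃ n : ℕ, ∀ l : List G, l.Chain' (· < ·) → (∀ x ∈ l, x ∈ Set.Icc (1 : G) s) →
      l.length ≤ n) ∧
    (∀ a : G, 1 ≤ a → a ≤ s →
      ∃ A : Finset G, (∀ x ∈ A, (1 : G) ⋖ x ∧ x ≤ s) ∧
        IsLUB (insert (1 : G) (↑A : Set G)) a) := by
  obtain ⟨h1s, hnorm, -⟩ := hs
  obtain ⟨M, hM, hfold⟩ := RLG.exists_coatom_list hG hglb h1s.le
  -- Part 3
  have part3 : ∀ a : G, 1 ≤ a → a ≤ s →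
      ∃ A : Finset G, (∀ x ∈ A, (1 : G) ⋖ x ∧ x ≤ s) ∧
        IsLUB (insert (1 : G) (↑A : Set G)) a := by
    classical
    intro a ha1 has
    obtain ⟨l, hl, hfoldr⟩ := RLG.atomistic hG hglb hM hfold h1s.le ha1 has
    refine ⟨l.toFinset, ?_, ?_⟩
    · intro x hx
      rw [List.mem_toFinset] at hx
      exact ⟨(hl x hx).1, (hl x hx).2.trans has⟩
    · rw [List.coe_toFinset, ← hfoldr]
      exact RLG.isLUB_foldr_sup l
  refine ⟨?_, ?_, part3⟩
  · -- Part 1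
    constructor
    · intro g hg
      have hg' : g⁻¹ ⋖ 1 := by
        have := RLG.covBy_mul_right g⁻¹ hg
        simpa using this
      have h1 : s⁻¹ ≤ g⁻¹ := hglb.1 hg'
      have h2 : s⁻¹ * g ≤ 1 := by
        have := mul_le_mul_left h1 g
        simpa using this
      have h3 := RLG.normal_mono hnorm h2
      simpa using h3
    · intro u hu
      obtain ⟨A, hA, hlub⟩ := part3 s h1s.le le_rfl
      have h1u : (1 : G) ≤ u := by
        obtain ⟨p, hp, -⟩ := RLG.exists_atom hG h1s
        exact le_trans hp.1.le (hu hp)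
      refine hlub.2 ?_
      rintro x (rfl | hx)
      · exact h1u
      · exact hu (hA x hx).1
  · -- Part 2
    refine ⟨M.length + 1, fun l hl hmem => ?_⟩
    have hchain : RLG.CovChainLE (1 : G) s M.length := by
      rw [← hfold]
      exact RLG.covchain_foldr M hM
    exact RLG.chain_bound hchain l hl fun x hx => Set.mem_Icc.1 (hmem x hx)
end
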